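/- Let (p_i)_{i∈I} be a family (indexed by a countable set I) of mutually orthogonal nonzero orthogonal projections on H, and let u be a unitary operator on H with u − 1 compact. Suppose that Σ_{i∈I} (u p_i u*) x (u p_i u*) = Σ_{i∈I} p_i x p_i for every compact operator x. Then there exists a bijection σ : I → I such that u p_i u* = p_{σ(i)} for every i ∈ I, u p_0 u* = p_0, σ(i) = i for all but finitely many i, and whenever σ(i) ≠ i the projection p_i has finite rank (equal to the rank of p_{σ(i)}). -/

import Mathlib

set_option linter.unusedSectionVars false
set_option maxHeartbeats 1000000

open scoped InnerProductSpace

namespace CUPB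

variable {H : Type*} [NormedAddCommGroup H] [InnerProductSpace ℂ H] [CompleteSpace H]
  {I : Type*}

lemma sa_inner (e : H →L[ℂ] H) (he : IsSelfAdjoint e) (x y : H) : ⟪e x, y⟫_ℂ = ⟪x, e y⟫_ℂ :=
  he.isSymmetric x y

/-- contraction property of selfadjoint idempotents -/
lemma sa_idem_contraction (e : H →L[ℂ] H) (he : IsSelfAdjoint e) (hi : e * e = e) (x : H) :
    ‖e x‖ ≤ ‖x‖ := by
  rcases eq_or_ne (e x) 0 with h | h
  · simp [h]
  · have h1 : (‖e x‖ : ℝ)^2 = RCLike.re ⟪e x, e x⟫_ℂ := by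
      rw [inner_self_eq_norm_sq]
    have h2 : ⟪e x, e x⟫_ℂ = ⟪x, e x⟫_ℂ := by
      rw [sa_inner e he x (e x)]
      congr 1
      have := congrArg (fun f => f x) hi
      simpa using this
    have h3 : RCLike.re ⟪x, e x⟫_ℂ ≤ ‖x‖ * ‖e x‖ := by
      calc RCLike.re ⟪x, e x⟫_ℂ ≤ ‖⟪x, e x⟫_ℂ‖ := RCLike.re_le_norm _
        _ ≤ ‖x‖ * ‖e x‖ := norm_inner_le_norm _ _
    nlinarith [norm_pos_iff.mpr h, h1 ▸ (h2 ▸ h3)]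

lemma sum_idem (q : I → H →L[ℂ] H) (hqidem : ∀ i, q i * q i = q i)
    (hqorth : ∀ i j, i ≠ j → q i * q j = 0) (F : Finset I) :
    (∑ i ∈ F, q i) * (∑ i ∈ F, q i) = ∑ i ∈ F, q i := by
  rw [Finset.sum_mul_sum]
  rw [Finset.sum_congr rfl (fun i hi => Finset.sum_eq_single i
    (fun j hj hij => hqorth i j (Ne.symm hij)) (fun h => absurd hi h))]
  exact Finset.sum_congr rfl fun i _ => hqidem i

lemma sum_sa (q : I → H →L[ℂ] H) (hqsa : ∀ i, IsSelfAdjoint (q i)) (F : Finset I) :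
    IsSelfAdjoint (∑ i ∈ F, q i) := by
  simpa [IsSelfAdjoint, star_sum] using Finset.sum_congr rfl fun i _ => (hqsa i)

lemma bessel_finset (q : I → H →L[ℂ] H) (hqsa : ∀ i, IsSelfAdjoint (q i))
    (hqidem : ∀ i, q i * q i = q i) (hqorth : ∀ i j, i ≠ j → q i * q j = 0)
    (ξ : H) (F : Finset I) : ∑ i ∈ F, ‖q i ξ‖^2 ≤ ‖ξ‖^2 := by
  have h1 : ∀ i, ‖q i ξ‖^2 = RCLike.re ⟪ξ, q i ξ⟫_ℂ := by
    intro i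
    rw [← inner_self_eq_norm_sq (𝕜 := ℂ), sa_inner (q i) (hqsa i)]
    have := congrArg (fun f => f ξ) (hqidem i)
    simp only [ContinuousLinearMap.mul_apply] at this
    rw [this]
  calc ∑ i ∈ F, ‖q i ξ‖^2 = RCLike.re ⟪ξ, (∑ i ∈ F, q i) ξ⟫_ℂ := by
        rw [ContinuousLinearMap.sum_apply, inner_sum, map_sum]
        exact Finset.sum_congr rfl fun i _ => h1 i
    _ ≤ ‖⟪ξ, (∑ i ∈ F, q i) ξ⟫_ℂ‖ := RCLike.re_le_norm _
    _ ≤ ‖ξ‖ * ‖(∑ i ∈ F, q i) ξ‖ := norm_inner_le_norm _ _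
    _ ≤ ‖ξ‖ * ‖ξ‖ := by
        gcongr
        exact sa_idem_contraction _ (sum_sa q hqsa F) (sum_idem q hqidem hqorth F) ξ
    _ = ‖ξ‖^2 := (sq ‖ξ‖).symm

lemma bessel_summable (q : I → H →L[ℂ] H) (hqsa : ∀ i, IsSelfAdjoint (q i))
    (hqidem : ∀ i, q i * q i = q i) (hqorth : ∀ i j, i ≠ j → q i * q j = 0)
    (ξ : H) : Summable (fun i => ‖q i ξ‖^2) :=
  summable_of_sum_le (fun i => sq_nonneg _) (bessel_finset q hqsa hqidem hqorth ξ)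

noncomputable def rankOne (ξ : H) : H →L[ℂ] H := (innerSL ℂ ξ).smulRight ξ

@[simp] lemma rankOne_apply (ξ η : H) : rankOne ξ η = ⟪ξ, η⟫_ℂ • ξ := rfl

lemma rankOne_compact (ξ : H) : IsCompactOperator ⇑(rankOne ξ) := by
  rcases eq_or_ne ξ 0 with rfl | hξ
  · have : ⇑(rankOne (0:H)) = fun _ => (0:H) := by ext η; simp
    rw [this]; exact isCompactOperator_zero
  · refine ⟨(fun c : ℂ => c • ξ) '' (Metric.closedBall 0 ‖ξ‖), ?_, ?_⟩
    · exact (isCompact_closedBall 0 ‖ξ‖).image (by fun_prop)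
    · have : (fun η => ⟪ξ, η⟫_ℂ) ⁻¹' (Metric.closedBall 0 ‖ξ‖) ∈ nhds (0:H) := by
        apply ContinuousAt.preimage_mem_nhds
        · exact (innerSL ℂ ξ).continuous.continuousAt
        · simp [Metric.closedBall_mem_nhds, norm_pos_iff, hξ]
      refine Filter.mem_of_superset this ?_
      intro η hη
      exact ⟨⟪ξ, η⟫_ℂ, hη, rfl⟩

lemma conj_rankOne (e : H →L[ℂ] H) (he : IsSelfAdjoint e) (ξ : H) :
    e * rankOne ξ * e = rankOne (e ξ) := by
  ext η
  simp only [ContinuousLinearMap.mul_apply, rankOne_apply, map_smul]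
  rw [sa_inner e he ξ η]

lemma rankOne_norm_le (ξ : H) : ‖rankOne ξ‖ ≤ ‖ξ‖^2 := by
  apply ContinuousLinearMap.opNorm_le_bound _ (sq_nonneg _)
  intro η
  rw [rankOne_apply, norm_smul]
  calc ‖⟪ξ, η⟫_ℂ‖ * ‖ξ‖ ≤ (‖ξ‖ * ‖η‖) * ‖ξ‖ := by gcongr; exact norm_inner_le_norm _ _
    _ = ‖ξ‖^2 * ‖η‖ := by ring

lemma tsum_apply' (T : I → H →L[ℂ] H) (hT : Summable T) (η : H) :
    (∑' i, T i) η = ∑' i, T i η :=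
  (((ContinuousLinearMap.apply ℂ H) η).hasSum hT.hasSum).tsum_eq.symm

@[simp] lemma rankOne_zero : rankOne (0 : H) = 0 := by ext η; simp

lemma lemmaA
    (q : I → H →L[ℂ] H) (hqsa : ∀ i, IsSelfAdjoint (q i))
    (hqidem : ∀ i, q i * q i = q i) (hqorth : ∀ i j, i ≠ j → q i * q j = 0)
    (r : I → H →L[ℂ] H) (hrsa : ∀ i, IsSelfAdjoint (r i))
    (heq : ∀ x : H →L[ℂ] H, IsCompactOperator ⇑x →
      ∑' i, q i * x * q i = ∑' i, r i * x * r i)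
    (ξ : H) (hξ : ξ ≠ 0) (j : I) (hj : r j ξ = ξ) (hj' : ∀ k, k ≠ j → r k ξ = 0) :
    ∃ i, q i ξ = ξ := by
  -- the operator identity
  have hx := heq (rankOne ξ) (rankOne_compact ξ)
  have hqconj : ∀ i, q i * rankOne ξ * q i = rankOne (q i ξ) :=
    fun i => conj_rankOne (q i) (hqsa i) ξ
  have hrconj : ∀ i, r i * rankOne ξ * r i = rankOne (r i ξ) :=
    fun i => conj_rankOne (r i) (hrsa i) ξ
  have hrhs : ∑' i, r i * rankOne ξ * r i = rankOne ξ := by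
    rw [tsum_eq_single j]
    · rw [hrconj j, hj]
    · intro k hk; rw [hrconj k, hj' k hk, rankOne_zero]
  have hsum : Summable (fun i => rankOne (q i ξ)) := by
    apply Summable.of_norm_bounded (bessel_summable q hqsa hqidem hqorth ξ)
    intro i; exact rankOne_norm_le _
  have hlhs : ∑' i, q i * rankOne ξ * q i = ∑' i, rankOne (q i ξ) := by
    congr 1; ext1 i; exact hqconj i
  have key : ∀ η : H, HasSum (fun i => ⟪q i ξ, η⟫_ℂ • (q i ξ)) (⟪ξ, η⟫_ℂ • ξ) := by
    intro η
    have h1 := ((ContinuousLinearMap.apply ℂ H) η).hasSum hsum.hasSum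
    simp only [ContinuousLinearMap.apply_apply, rankOne_apply] at h1
    have h2 : (∑' i, rankOne (q i ξ)) η = ⟪ξ, η⟫_ℂ • ξ := by
      rw [← hlhs, hx, hrhs, rankOne_apply]
    rwa [h2] at h1
  -- each q i ξ lies in the span of ξ
  have hspan : ∀ i, ∃ c : ℂ, q i ξ = c • ξ := by
    intro i
    have horth : ∀ η ∈ (ℂ ∙ ξ)ᗮ, ⟪η, q i ξ⟫_ℂ = 0 := by
      intro η hη
      have hξη : ⟪ξ, η⟫_ℂ = 0 := hη ξ (Submodule.mem_span_singleton_self ξ)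
      have h3 := (innerSL ℂ η).hasSum (key η)
      simp only [hξη, zero_smul, inner_zero_right, innerSL_apply_apply,
        inner_smul_right] at h3
      have h4 := Complex.reCLM.hasSum h3
      simp only [map_zero] at h4
      have h5 : ∀ k, Complex.re (⟪q k ξ, η⟫_ℂ * ⟪η, q k ξ⟫_ℂ) = Complex.normSq (⟪η, q k ξ⟫_ℂ) := by
        intro k
        have hco : ⟪q k ξ, η⟫_ℂ = (starRingEnd ℂ) ⟪η, q k ξ⟫_ℂ := (inner_conj_symm _ _).symm
        rw [hco, mul_comm, Complex.mul_conj]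
        simp
      have h6 : HasSum (fun k => Complex.normSq (⟪η, q k ξ⟫_ℂ)) 0 := by
        convert h4 using 1; ext1 k; exact (h5 k).symm
      have h7 : Complex.normSq (⟪η, q i ξ⟫_ℂ) ≤ 0 := by
        have := le_hasSum h6 i (fun k _ => Complex.normSq_nonneg _)
        linarith [this]
      have := le_antisymm h7 (Complex.normSq_nonneg _)
      exact Complex.normSq_eq_zero.mp this
    have hmem : q i ξ ∈ ((ℂ ∙ ξ)ᗮ)ᗮ := by
      intro η hη
      exact horth η hη
    rw [Submodule.orthogonal_orthogonal] at hmem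
    obtain ⟨c, hc⟩ := Submodule.mem_span_singleton.mp hmem
    exact ⟨c, hc.symm⟩
  by_contra hnone
  push_neg at hnone
  have hzero : ∀ i, q i ξ = 0 := by
    intro i
    obtain ⟨c, hc⟩ := hspan i
    have : q i (q i ξ) = q i ξ := by
      have := congrArg (fun f => f ξ) (hqidem i)
      simpa using this
    rw [hc, map_smul, hc, smul_smul] at this
    have hcc : (c * c - c) • ξ = 0 := by rw [sub_smul]; rw [this]; simp
    have hc2 : c * c = c := by
      rcases smul_eq_zero.mp hcc with h | h
      · linear_combination h
      · exact absurd h hξ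
    have hc3 : c * (c - 1) = 0 := by ring_nf; linear_combination hc2 - c
    rcases mul_eq_zero.mp hc3 with h | h
    
    · rw [hc, h, zero_smul]
    · exfalso
      have h1 : c = 1 := by linear_combination h
      exact hnone i (by rw [hc, h1, one_smul])
  have := (key ξ).tsum_eq
  simp only [hzero, inner_zero_left, zero_smul, tsum_zero] at this
  exact hξ (by
    have h8 : ⟪ξ, ξ⟫_ℂ • ξ = 0 := this.symm
    have h9 : ⟪ξ, ξ⟫_ℂ ≠ 0 := by simpa using hξ
    rcases smul_eq_zero.mp h8 with h | h
    · exact absurd h h9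
    · exact h)

lemma fixed_unique (q : I → H →L[ℂ] H) (hqorth : ∀ i j, i ≠ j → q i * q j = 0)
    {i k : I} (hik : k ≠ i) {ξ : H} (h : q i ξ = ξ) : q k ξ = 0 := by
  have := congrArg (fun f => f ξ) (hqorth k i hik)
  simp only [ContinuousLinearMap.mul_apply, ContinuousLinearMap.zero_apply] at this
  rw [← h]; exact this

lemma lemmaC
    (q : I → H →L[ℂ] H) (hqsa : ∀ i, IsSelfAdjoint (q i))
    (hqidem : ∀ i, q i * q i = q i) (hqorth : ∀ i j, i ≠ j → q i * q j = 0)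
    (r : I → H →L[ℂ] H) (hrsa : ∀ i, IsSelfAdjoint (r i))
    (hridem : ∀ i, r i * r i = r i) (hrorth : ∀ i j, i ≠ j → r i * r j = 0)
    (heq : ∀ x : H →L[ℂ] H, IsCompactOperator ⇑x →
      ∑' i, q i * x * q i = ∑' i, r i * x * r i)
    (j : I) (hrj : r j ≠ 0) :
    ∃ i, q i * r j = r j := by
  have hran : ∀ w : H, r j (r j w) = r j w := by
    intro w
    have := congrArg (fun f => f (w)) (hridem j)
    simpa using this
  have hko : ∀ (w : H) k, k ≠ j → r k (r j w) = 0 := by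
    intro w k hk
    have := congrArg (fun f => f w) (hrorth k j hk)
    simpa using this
  obtain ⟨v, hv⟩ : ∃ v, r j v ≠ 0 := by
    by_contra hc; push_neg at hc
    exact hrj (by ext w; simpa using hc w)
  set ξ0 := r j v with hξ0
  obtain ⟨i0, hi0⟩ := lemmaA q hqsa hqidem hqorth r hrsa heq ξ0 hv j (hran v) (hko v)
  refine ⟨i0, ?_⟩
  ext w
  simp only [ContinuousLinearMap.mul_apply]
  rcases eq_or_ne (r j w) 0 with h0 | h0
  · rw [h0]; simp
  obtain ⟨i1, hi1⟩ := lemmaA q hqsa hqidem hqorth r hrsa heq (r j w) h0 j (hran w) (hko w)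
  rcases eq_or_ne i1 i0 with rfl | hne
  · exact hi1
  · exfalso
    rcases eq_or_ne (ξ0 + r j w) 0 with hζ | hζ
    · have hξ0η : ξ0 = -(r j w) := eq_neg_of_add_eq_zero_left hζ
      have hfix : q i1 ξ0 = ξ0 := by rw [hξ0η, map_neg, hi1]
      have hz : q i1 ξ0 = 0 := fixed_unique q hqorth hne hi0
      exact hv (by rw [← hfix, hz])
    · have hmem1 : r j (ξ0 + r j w) = ξ0 + r j w := by
        rw [map_add, hran w]
        rw [hξ0, hran v]
      have hmem2 : ∀ k, k ≠ j → r k (ξ0 + r j w) = 0 := by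
        intro k hk
        rw [map_add, hko w k hk, hξ0, hko v k hk, add_zero]
      obtain ⟨m, hm⟩ := lemmaA q hqsa hqidem hqorth r hrsa heq _ hζ j hmem1 hmem2
      rw [map_add] at hm
      rcases eq_or_ne m i0 with rfl | hm0
      · have h1 : q m (r j w) = 0 := fixed_unique q hqorth hne.symm hi1
        rw [hi0, h1, add_zero] at hm
        exact h0 (left_eq_add.mp hm)
      · have h1 : q m ξ0 = 0 := fixed_unique q hqorth hm0 hi0
        rcases eq_or_ne m i1 with rfl | hm1
        · rw [h1, hi1, zero_add] at hm
          exact hv (right_eq_add.mp hm)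
        · have h2 : q m (r j w) = 0 := fixed_unique q hqorth hm1 hi1
          rw [h1, h2, add_zero] at hm
          exact hζ hm.symm

lemma eq_of_fixed (e f : H →L[ℂ] H) (hesa : IsSelfAdjoint e) (heidem : e * e = e)
    (hfsa : IsSelfAdjoint f) (hfidem : f * f = f)
    (h : ∀ ξ, e ξ = ξ ↔ f ξ = ξ) : e = f := by
  have idem : ∀ (g : H →L[ℂ] H), g * g = g → ∀ x, g (g x) = g x := by
    intro g hg x
    have := congrArg (fun m => m x) hg
    simpa using this
  have key : ∀ (e f : H →L[ℂ] H), IsSelfAdjoint e → IsSelfAdjoint f → (f * f = f) →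
      (∀ ξ, e ξ = ξ ↔ f ξ = ξ) → ∀ ξ, e ξ = 0 → f ξ = 0 := by
    intro e f hesa hfsa hfidem h ξ hξ
    have hfix : e (f ξ) = f ξ := (h _).mpr (idem f hfidem ξ)
    have : ⟪f ξ, f ξ⟫_ℂ = 0 := by
      calc ⟪f ξ, f ξ⟫_ℂ = ⟪ξ, f (f ξ)⟫_ℂ := sa_inner f hfsa _ _
        _ = ⟪ξ, f ξ⟫_ℂ := by rw [idem f hfidem ξ]
        _ = ⟪ξ, e (f ξ)⟫_ℂ := by rw [hfix]
        _ = ⟪e ξ, f ξ⟫_ℂ := (sa_inner e hesa ξ (f ξ)).symm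
        _ = 0 := by rw [hξ, inner_zero_left]
    exact inner_self_eq_zero.mp this
  ext ξ
  have h1 : e (e ξ) = e ξ := idem e heidem ξ
  have h2 : f (e ξ) = e ξ := (h _).mp h1
  have h3 : e (ξ - e ξ) = 0 := by rw [map_sub, h1, sub_self]
  have h4 : f (ξ - e ξ) = 0 := key e f hesa hfsa hfidem h _ h3
  have : f ξ = f (e ξ) + f (ξ - e ξ) := by rw [← map_add]; congr 1; abel
  rw [this, h2, h4, add_zero]

lemma range_closed (e : H →L[ℂ] H) (hidem : e * e = e) :
    IsClosed ((LinearMap.range (e : H →ₗ[ℂ] H) : Submodule ℂ H) : Set H) := by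
  have hset : ((LinearMap.range (e : H →ₗ[ℂ] H) : Submodule ℂ H) : Set H) = ⇑(1 - e) ⁻¹' {0} := by
    ext x
    simp only [SetLike.mem_coe, LinearMap.mem_range, Set.mem_preimage, Set.mem_singleton_iff,
      ContinuousLinearMap.sub_apply, ContinuousLinearMap.one_apply, sub_eq_zero]
    constructor
    · rintro ⟨y, rfl⟩
      have := congrArg (fun m => m y) hidem
      simpa using this.symm
    · intro h; exact ⟨x, h.symm⟩
  rw [hset]
  exact isClosed_singleton.preimage (1 - e).continuous

lemma findim_of_compact_proj (e : H →L[ℂ] H) (hidem : e * e = e)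
    (hcpt : IsCompactOperator ⇑e) : FiniteDimensional ℂ ↥(LinearMap.range (e : H →ₗ[ℂ] H)) := by
  have hfix : ∀ x, x ∈ LinearMap.range (e : H →ₗ[ℂ] H) → e x = x := by
    rintro x ⟨y, rfl⟩
    have := congrArg (fun m => m y) hidem
    simpa using this
  have hV : ∀ v ∈ LinearMap.range (e : H →ₗ[ℂ] H), (e : H →ₗ[ℂ] H) v ∈ LinearMap.range (e : H →ₗ[ℂ] H) :=
    fun v _ => LinearMap.mem_range_self _ v
  have hcpt' : IsCompactOperator ⇑(e : H →ₗ[ℂ] H) := hcpt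
  have hVe : ∀ v ∈ LinearMap.range (e : H →ₗ[ℂ] H), (e : H →ₗ[ℂ] H) v ∈ LinearMap.range (e : H →ₗ[ℂ] H) :=
    fun v _ => LinearMap.mem_range_self _ v
  have hr := hcpt'.restrict (V := LinearMap.range (e : H →ₗ[ℂ] H)) hVe (range_closed e hidem)
  have hid : ⇑((e : H →ₗ[ℂ] H).restrict hVe) = id := by
    ext v
    · exact hfix v v.2
  rw [hid] at hr
  obtain ⟨K, hK, hmem⟩ := hr
  have : LocallyCompactSpace ↥(LinearMap.range (e : H →ₗ[ℂ] H)) :=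
    hK.locallyCompactSpace_of_mem_nhds_of_addGroup (by simpa using hmem)
  exact FiniteDimensional.of_locallyCompactSpace ℂ

end CUPB

open CUPB in
/-- If a unitary `u` with `u - 1` compact satisfies
`∑ (u p_i u*) x (u p_i u*) = ∑ p_i x p_i` for every compact `x`, then there is a bijection `σ`
of the index set with `u p_i u* = p_{σ(i)}`, `u p₀ u* = p₀`, `σ(i) = i` for all but finitely
many `i`, and whenever `σ(i) ≠ i` the projection `p i` has finite rank equal to the rank of
`pature (σ i)`. -/
theorem conjugating_unitary_permutes_blocks
    {H : Type*} [NormedAddCommGroup H] [InnerProductSpace ℂ H] [CompleteSpace H]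
    [TopologicalSpace.SeparableSpace H]
    (hinf : ¬ FiniteDimensional ℂ H)
    {I : Type*} [Countable I]
    (p : I → H →L[ℂ] H)
    (hpsa : ∀ i, IsSelfAdjoint (p i)) (hpidem : ∀ i, p i * p i = p i)
    (hporth : ∀ i j, i ≠ j → p i * p j = 0) (hpne : ∀ i, p i ≠ 0)
    (p0 : H →L[ℂ] H) (hp0sa : IsSelfAdjoint p0) (hp0idem : p0 * p0 = p0)
    (hp0fix : ∀ ξ : H, p0 ξ = ξ ↔ ∀ i, p i ξ = 0)
    (u : H →L[ℂ] H) (hu1 : star u * u = 1) (hu2 : u * star u = 1)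
    (hucpt : IsCompactOperator ⇑(u - 1))
    (heq : ∀ x : H →L[ℂ] H, IsCompactOperator ⇑x →
      ∑' i, (u * p i * star u) * x * (u * p i * star u) = ∑' i, p i * x * p i) :
    ∃ σ : I ≃ I, (∀ i, u * p i * star u = p (σ i)) ∧ u * p0 * star u = p0 ∧
      {i | σ i ≠ i}.Finite ∧
      ∀ i, σ i ≠ i →
        FiniteDimensional ℂ ↥(LinearMap.range (p i : H →ₗ[ℂ] H)) ∧
        Module.rank ℂ ↥(LinearMap.range (p i : H →ₗ[ℂ] H)) =
          Module.rank ℂ ↥(LinearMap.range (p (σ i) : H →ₗ[ℂ] H)) := by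
  set q : I → H →L[ℂ] H := fun i => u * p i * star u with hq
  -- basic unitary facts
  have huL : ∀ x : H, star u (u x) = x := by
    intro x
    have := congrArg (fun m => m x) hu1
    simpa using this
  have huR : ∀ x : H, u (star u x) = x := by
    intro x
    have := congrArg (fun m => m x) hu2
    simpa using this
  have uinj : Function.Injective ⇑u := fun a b hab => by
    have := congrArg (⇑(star u)) hab
    simpa [huL] using this
  have inner_u : ∀ x y : H, ⟪u x, u y⟫_ℂ = ⟪x, y⟫_ℂ := by
    intro x y
    have h := ContinuousLinearMap.adjoint_inner_left u y (u x)
    rw [← ContinuousLinearMap.star_eq_adjoint] at h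
    rw [← h]
    rw [huL]
  have norm_u : ∀ x : H, ‖u x‖ = ‖x‖ := by
    intro x
    have h : ‖u x‖^2 = ‖x‖^2 := by
      rw [← inner_self_eq_norm_sq (𝕜 := ℂ), ← @inner_self_eq_norm_sq ℂ _ _ _ _ x, inner_u]
    nlinarith [norm_nonneg (u x), norm_nonneg x]
  -- q family facts
  have hqsa : ∀ i, IsSelfAdjoint (q i) := by
    intro i
    rw [hq]
    simp only [IsSelfAdjoint, star_mul, star_star]
    rw [(hpsa i).star_eq, mul_assoc]
  have hqidem : ∀ i, q i * q i = q i := by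
    intro i
    rw [hq]
    simp only []
    calc (u * p i * star u) * (u * p i * star u)
        = u * (p i * ((star u * u) * p i)) * star u := by noncomm_ring
      _ = u * (p i * p i) * star u := by rw [hu1, one_mul]
      _ = u * p i * star u := by rw [hpidem i]
  have hqorth : ∀ i j, i ≠ j → q i * q j = 0 := by
    intro i j hij
    rw [hq]
    simp only []
    calc (u * p i * star u) * (u * p j * star u)
        = u * (p i * ((star u * u) * p j)) * star u := by noncomm_ring
      _ = u * (p i * p j) * star u := by rw [hu1, one_mul]
      _ = 0 := by rw [hporth i j hij, mul_zero, zero_mul]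
  have hqne : ∀ i, q i ≠ 0 := by
    intro i h0
    apply hpne i
    have : star u * q i * u = p i := by
      rw [hq]
      simp only []
      calc star u * (u * p i * star u) * u = (star u * u) * p i * (star u * u) := by
            noncomm_ring
        _ = p i := by rw [hu1]; simp
    rw [h0] at this
    simpa using this.symm
  have heq' : ∀ x : H →L[ℂ] H, IsCompactOperator ⇑x →
      ∑' i, q i * x * q i = ∑' i, p i * x * p i := heq
  -- construct τ and ρ
  have hτ : ∀ j, ∃ i, q i * p j = p j := fun j =>
    lemmaC q hqsa hqidem hqorth p hpsa hpidem hporth heq' j (hpne j)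
  have hρ : ∀ i, ∃ m, p m * q i = q i := fun i =>
    lemmaC p hpsa hpidem hporth q hqsa hqidem hqorth
      (fun x hx => (heq' x hx).symm) i (hqne i)
  set τ : I → I := fun j => (hτ j).choose with hτdef
  set ρ : I → I := fun i => (hρ i).choose with hρdef
  have hτspec : ∀ j, q (τ j) * p j = p j := fun j => (hτ j).choose_spec
  have hρspec : ∀ i, p (ρ i) * q i = q i := fun i => (hρ i).choose_spec
  have flip : ∀ a b : H →L[ℂ] H, IsSelfAdjoint a → IsSelfAdjoint b →
      a * b = b → b * a = b := by
    intro a b ha hb hab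
    have := congrArg star hab
    rwa [star_mul, ha.star_eq, hb.star_eq] at this
  have hρτ : ∀ j, ρ (τ j) = j := by
    intro j
    by_contra hne
    have h1 : p j * q (τ j) = p j := flip _ _ (hqsa _) (hpsa _) (hτspec j)
    have h2 : p (ρ (τ j)) * q (τ j) = q (τ j) := hρspec (τ j)
    have h3 : p j * p (ρ (τ j)) = 0 := hporth _ _ (fun h => hne h.symm)
    have : p j = 0 := by
      calc p j = p j * q (τ j) := h1.symm
        _ = p j * (p (ρ (τ j)) * q (τ j)) := by rw [h2]
        _ = (p j * p (ρ (τ j))) * q (τ j) := (mul_assoc (p j) _ _).symm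
        _ = 0 := by rw [h3, zero_mul]
    exact hpne j this
  have hτρ : ∀ i, τ (ρ i) = i := by
    intro i
    by_contra hne
    have h1 : q i * p (ρ i) = q i := flip _ _ (hpsa _) (hqsa _) (hρspec i)
    have h2 : q (τ (ρ i)) * p (ρ i) = p (ρ i) := hτspec (ρ i)
    have h3 : q i * q (τ (ρ i)) = 0 := hqorth _ _ (fun h => hne h.symm)
    have : q i = 0 := by
      calc q i = q i * p (ρ i) := h1.symm
        _ = q i * (q (τ (ρ i)) * p (ρ i)) := by rw [h2]
        _ = (q i * q (τ (ρ i))) * p (ρ i) := (mul_assoc (q i) _ _).symm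
        _ = 0 := by rw [h3, zero_mul]
    exact hqne i this
  have hq_eq : ∀ j, q (τ j) = p j := by
    intro j
    have h1 : p j * q (τ j) = p j := flip _ _ (hqsa _) (hpsa _) (hτspec j)
    have h2 : p (ρ (τ j)) * q (τ j) = q (τ j) := hρspec (τ j)
    rw [hρτ j] at h2
    rw [← h2, h1]
  have hqp : ∀ i, q i = p (ρ i) := by
    intro i
    conv_lhs => rw [← hτρ i]
    exact hq_eq (ρ i)
  have hup : ∀ i, p (ρ i) * u = u * p i := by
    intro i
    rw [← hqp i]
    calc q i * u = u * p i * (star u * u) := by noncomm_ring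
      _ = u * p i := by rw [hu1, mul_one]
  refine ⟨⟨ρ, τ, hτρ, hρτ⟩, ?_, ?_, ?_, ?_⟩
  · -- main conjugation identity
    intro i
    exact hqp i
  · -- p0 part
    have hq0sa : IsSelfAdjoint (u * p0 * star u) := by
      simp only [IsSelfAdjoint, star_mul, star_star]
      rw [hp0sa.star_eq, mul_assoc]
    have hq0idem : (u * p0 * star u) * (u * p0 * star u) = u * p0 * star u := by
      calc (u * p0 * star u) * (u * p0 * star u)
          = u * (p0 * ((star u * u) * p0)) * star u := by noncomm_ring
        _ = u * (p0 * p0) * star u := by rw [hu1, one_mul]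
        _ = u * p0 * star u := by rw [hp0idem]
    apply eq_of_fixed _ _ hq0sa hq0idem hp0sa hp0idem
    intro ξ
    have happly : ∀ ζ : H, (u * p0 * star u) ζ = u (p0 (star u ζ)) := by
      intro ζ; rfl
    have hfix1 : (u * p0 * star u) ξ = ξ ↔ p0 (star u ξ) = star u ξ := by
      rw [happly]
      constructor
      · intro h
        have := congrArg (⇑(star u)) h
        rwa [huL] at this
      · intro h
        rw [h, huR]
    have hfix2 : (∀ i, p i (star u ξ) = 0) ↔ (∀ i, q i ξ = 0) := by
      constructor
      · intro h i
        show (u * p i * star u) ξ = 0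
        have : (u * p i * star u) ξ = u (p i (star u ξ)) := rfl
        rw [this, h i, map_zero]
      · intro h i
        have h1 : q i ξ = u (p i (star u ξ)) := rfl
        have h2 : u (p i (star u ξ)) = 0 := by rw [← h1, h i]
        have := congrArg (⇑(star u)) h2
        rwa [huL, map_zero] at this
    have hfix3 : (∀ i, q i ξ = 0) ↔ (∀ i, p i ξ = 0) := by
      constructor
      · intro h j
        have := h (τ j)
        rwa [hq_eq j] at this
      · intro h i
        have h1 : q i = p (ρ i) := by
          conv_lhs => rw [← hτρ i]
          exact hq_eq (ρ i)
        rw [h1]; exact h (ρ i)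
    rw [hfix1, hp0fix (star u ξ), hfix2, hfix3, ← hp0fix ξ]
  · -- finiteness
    show {i | ρ i ≠ i}.Finite
    by_contra hfin
    have hinfM : {i : I | ρ i ≠ i}.Infinite := hfin
    set emb := hinfM.natEmbedding with hembdef
    set idx : ℕ → I := fun n => (emb n : I) with hidx
    have hidxinj : Function.Injective idx :=
      fun a b h => emb.injective (Subtype.val_injective h)
    have hmoved : ∀ n, ρ (idx n) ≠ idx n := fun n => (emb n).2
    have hvec : ∀ i : I, ∃ ξ : H, p i ξ = ξ ∧ ‖ξ‖ = 1 := by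
      intro i
      have hex : ∃ v, p i v ≠ 0 := by
        by_contra hc; push_neg at hc
        exact hpne i (by ext w; simpa using hc w)
      obtain ⟨v, hv⟩ := hex
      have hnv : ‖p i v‖ ≠ 0 := norm_ne_zero_iff.mpr hv
      refine ⟨((‖p i v‖ : ℂ))⁻¹ • p i v, ?_, ?_⟩
      · rw [map_smul]
        congr 1
        have := congrArg (fun m => m v) (hpidem i)
        simpa using this
      · rw [norm_smul, norm_inv]
        simp only [Complex.norm_real, Real.norm_eq_abs, abs_norm]
        field_simp
    choose ξ hξfix hξnorm using hvec
    set ξn : ℕ → H := fun n => ξ (idx n) with hξn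
    have hufix : ∀ n, p (ρ (idx n)) (u (ξn n)) = u (ξn n) := by
      intro n
      have h := congrArg (fun m => m (ξn n)) (hup (idx n))
      simp only [ContinuousLinearMap.mul_apply] at h
      rw [h, hξfix (idx n)]
    have hinner0 : ∀ n, ⟪u (ξn n), ξn n⟫_ℂ = 0 := by
      intro n
      have h2 : p (idx n) (u (ξn n)) = 0 := by
        rw [← hufix n]
        have := congrArg (fun m => m (u (ξn n)))
          (hporth (idx n) (ρ (idx n)) (fun h => hmoved n h.symm))
        simpa using this
      calc ⟪u (ξn n), ξn n⟫_ℂ = ⟪u (ξn n), p (idx n) (ξn n)⟫_ℂ := by rw [hξfix]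
        _ = ⟪p (idx n) (u (ξn n)), ξn n⟫_ℂ :=
            (sa_inner (p (idx n)) (hpsa (idx n)) (u (ξn n)) (ξn n)).symm
        _ = 0 := by rw [h2, inner_zero_left]
    have hTnorm : ∀ n, ‖(u - 1) (ξn n)‖ = Real.sqrt 2 := by
      intro n
      have h1 : (u - 1) (ξn n) = u (ξn n) - ξn n := by
        simp [ContinuousLinearMap.sub_apply]
      have h2 : ‖(u - 1) (ξn n)‖^2 = 2 := by
        rw [h1, @norm_sub_sq ℂ]
        rw [hinner0 n]
        simp [norm_u, hξnorm]
        simp only [hξn, hξnorm]; norm_num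
      rw [← Real.sqrt_sq (norm_nonneg ((u - 1) (ξn n))), h2]
    obtain ⟨K, hK, hnhds⟩ := hucpt
    obtain ⟨ε, hε, hball⟩ := Metric.mem_nhds_iff.mp hnhds
    set c : ℂ := ((ε/2 : ℝ) : ℂ) with hc
    have hcnorm : ‖c‖ = ε/2 := by
      rw [hc, Complex.norm_real, Real.norm_eq_abs, abs_of_pos (by linarith)]
    have hmemK : ∀ n, (u - 1) (c • ξn n) ∈ K := by
      intro n
      apply hball
      rw [Metric.mem_ball, dist_zero_right, norm_smul, hcnorm, hξnorm, mul_one]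
      linarith
    obtain ⟨a, haK, φ, hφ, hconv⟩ := hK.tendsto_subseq hmemK
    have hwnorm : ∀ n, ‖(u - 1) (c • ξn n)‖ = (ε/2) * Real.sqrt 2 := by
      intro n
      rw [map_smul, norm_smul, hcnorm, hTnorm n]
    have hanorm : ‖a‖ = (ε/2) * Real.sqrt 2 := by
      have h1 : Filter.Tendsto (fun k => ‖(u - 1) (c • ξn (φ k))‖) Filter.atTop (nhds ‖a‖) :=
        hconv.norm
      have h2 : (fun k => ‖(u - 1) (c • ξn (φ k))‖) = fun _ => (ε/2) * Real.sqrt 2 :=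
        funext fun k => hwnorm (φ k)
      rw [h2] at h1
      exact tendsto_nhds_unique h1 tendsto_const_nhds
    have hapos : a ≠ 0 := by
      intro h0
      rw [h0, norm_zero] at hanorm
      have hs2 : Real.sqrt 2 > 0 := by positivity
      nlinarith
    have bess : ∀ (r : I → H →L[ℂ] H), (∀ i, IsSelfAdjoint (r i)) → (∀ i, r i * r i = r i) →
        (∀ i j, i ≠ j → r i * r j = 0) → ∀ (idx' : ℕ → I), Function.Injective idx' →
        Filter.Tendsto (fun n => ‖r (idx' n) a‖) Filter.atTop (nhds 0) := by
      intro r hs hi ho idx' hinj'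
      have hsum : Summable (fun i : I => ‖r i a‖^2) := bessel_summable r hs hi ho a
      have hsum2 : Summable (fun n : ℕ => ‖r (idx' n) a‖^2) := hsum.comp_injective hinj'
      have h0 := hsum2.tendsto_atTop_zero
      have h1 := (Real.continuous_sqrt.tendsto 0).comp h0
      simp only [Function.comp_def, Real.sqrt_zero] at h1
      convert h1 using 2 with n
      rw [Real.sqrt_sq (norm_nonneg _)]
    have t1 : Filter.Tendsto (fun n => ⟪a, ξn n⟫_ℂ) Filter.atTop (nhds 0) := by
      apply squeeze_zero_norm _ (bess p hpsa hpidem hporth idx hidxinj)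
      intro n
      calc ‖⟪a, ξn n⟫_ℂ‖ = ‖⟪a, p (idx n) (ξn n)⟫_ℂ‖ := by rw [hξfix]
        _ = ‖⟪p (idx n) a, ξn n⟫_ℂ‖ := by
            rw [sa_inner (p (idx n)) (hpsa (idx n)) a (ξn n)]
        _ ≤ ‖p (idx n) a‖ * ‖ξn n‖ := norm_inner_le_norm _ _
        _ = ‖p (idx n) a‖ := by rw [hξnorm, mul_one]
    have hρinj : Function.Injective ρ := (Equiv.mk ρ τ hτρ hρτ).injective
    have t2 : Filter.Tendsto (fun n => ⟪a, u (ξn n)⟫_ℂ) Filter.atTop (nhds 0) := by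
      apply squeeze_zero_norm _
        (bess p hpsa hpidem hporth (fun n => ρ (idx n)) (hρinj.comp hidxinj))
      intro n
      calc ‖⟪a, u (ξn n)⟫_ℂ‖ = ‖⟪a, p (ρ (idx n)) (u (ξn n))⟫_ℂ‖ := by rw [hufix]
        _ = ‖⟪p (ρ (idx n)) a, u (ξn n)⟫_ℂ‖ := by
            rw [sa_inner (p (ρ (idx n))) (hpsa _) a (u (ξn n))]
        _ ≤ ‖p (ρ (idx n)) a‖ * ‖u (ξn n)‖ := norm_inner_le_norm _ _
        _ = ‖p (ρ (idx n)) a‖ := by rw [norm_u, hξnorm, mul_one]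
    have t3 : Filter.Tendsto (fun n => ⟪a, (u - 1) (c • ξn n)⟫_ℂ) Filter.atTop (nhds 0) := by
      have heqn : (fun n => ⟪a, (u - 1) (c • ξn n)⟫_ℂ)
          = fun n => c * (⟪a, u (ξn n)⟫_ℂ - ⟪a, ξn n⟫_ℂ) := by
        funext n
        rw [map_smul, inner_smul_right]
        congr 1
        rw [ContinuousLinearMap.sub_apply, inner_sub_right]
        simp
      rw [heqn]
      have := (t2.sub t1).const_mul c
      simpa using this
    have t4 : Filter.Tendsto (fun k => ⟪a, (u - 1) (c • ξn (φ k))⟫_ℂ)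
        Filter.atTop (nhds ⟪a, a⟫_ℂ) := tendsto_const_nhds.inner hconv
    have t5 : Filter.Tendsto (fun k => ⟪a, (u - 1) (c • ξn (φ k))⟫_ℂ)
        Filter.atTop (nhds 0) := t3.comp (hφ.tendsto_atTop)
    have hzero : ⟪a, a⟫_ℂ = 0 := tendsto_nhds_unique t4 t5
    exact hapos (inner_self_eq_zero.mp hzero)
  · -- finite rank
    intro i hne0
    have hne : ρ i ≠ i := hne0
    have hpup : p i * u * p i = 0 := by
      calc p i * u * p i = p i * (u * p i) := by rw [mul_assoc]
        _ = p i * (p (ρ i) * u) := by rw [hup i]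
        _ = (p i * p (ρ i)) * u := (mul_assoc _ _ _).symm
        _ = 0 := by rw [hporth i (ρ i) (fun h => hne h.symm), zero_mul]
    have hneg : p i * (u - 1) * p i = -(p i) := by
      have : p i * (u - 1) * p i = p i * u * p i - p i * p i := by noncomm_ring
      rw [this, hpup, hpidem i, zero_sub]
    have h1 : IsCompactOperator (⇑(u - 1) ∘ ⇑(p i)) := hucpt.comp_clm (p i)
    have h2 : IsCompactOperator (⇑(p i) ∘ (⇑(u - 1) ∘ ⇑(p i))) := h1.clm_comp (p i)
    have h3 : (⇑(p i) ∘ (⇑(u - 1) ∘ ⇑(p i))) = ⇑(p i * (u - 1) * p i) := rfl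
    rw [h3, hneg] at h2
    have h4 : IsCompactOperator ⇑(p i) := by
      have h4' := h2.neg
      have h5 : -⇑(-p i) = ⇑(p i) := by funext x; simp
      rwa [h5] at h4'
    refine ⟨findim_of_compact_proj (p i) (hpidem i) h4, ?_⟩
    have hrange : LinearMap.range (p (ρ i) : H →ₗ[ℂ] H) =
        Submodule.map (u : H →ₗ[ℂ] H) (LinearMap.range (p i : H →ₗ[ℂ] H)) := by
      ext x
      simp only [LinearMap.mem_range, Submodule.mem_map]
      constructor
      · rintro ⟨y, rfl⟩
        refine ⟨p i (star u y), ⟨star u y, rfl⟩, ?_⟩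
        show u (p i (star u y)) = p (ρ i) y
        have h6 : q i y = u (p i (star u y)) := rfl
        rw [← h6, hqp i]
      · rintro ⟨z, ⟨w, rfl⟩, rfl⟩
        refine ⟨u (p i w), ?_⟩
        have h7 := congrArg (fun m => m (p i w)) (hup i)
        simp only [ContinuousLinearMap.mul_apply] at h7
        have h8 : p i (p i w) = p i w := by
          have := congrArg (fun m => m w) (hpidem i)
          simpa using this
        rw [h8] at h7
        exact h7
    show Module.rank ℂ ↥(LinearMap.range (p i : H →ₗ[ℂ] H)) = Module.rank ℂ ↥(LinearMap.range (p (ρ i) : H →ₗ[ℂ] H))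
    rw [hrange]
    have uinj' : Function.Injective ⇑(u : H →ₗ[ℂ] H) := uinj
    exact (Submodule.equivMapOfInjective (u : H →ₗ[ℂ] H) uinj'
      (LinearMap.range (p i : H →ₗ[ℂ] H))).rank_eq
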